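/- Let G = (V,E) be a finite simple graph with |V| = n and let v_* be the coalitional game on V defined by v_*(S) = |S ∪ N(S)|. Then for every vertex x ∈ V, the Shapley value of x in v_* equals Σ_{y ∈ N̂(x)} 1/(deg(y)+1). -/
import Mathlib

open scoped Classical

noncomputable section

/-- The set of players preceding `x` in the permutation `π` (players listed as `π 0, π 1, ...`). -/
def preds {n : ℕ} (π : Equiv.Perm (Fin n)) (x : Fin n) : Finset (Fin n) :=
  Finset.univ.filter fun y => π.symm y < π.symm x

/-- The Shapley value of player `x` in the coalitional game `v`. -/
def Sh {n : ℕ} (v : Finset (Fin n) → ℝ) (x : Fin n) : ℝ :=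
  (∑ π : Equiv.Perm (Fin n), (v (insert x (preds π x)) - v (preds π x))) / (n.factorial : ℝ)

/-- The neighborhood `N(x)` of a vertex as a `Finset`. -/
def nbr {n : ℕ} (G : SimpleGraph (Fin n)) (x : Fin n) : Finset (Fin n) :=
  Finset.univ.filter fun y => G.Adj x y

/-- `N(S) = ⋃_{x ∈ S} N(x)`. -/
def nbrS {n : ℕ} (G : SimpleGraph (Fin n)) (S : Finset (Fin n)) : Finset (Fin n) :=
  S.biUnion (nbr G)

lemma mem_nbr {n : ℕ} {G : SimpleGraph (Fin n)} {x y : Fin n} :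
    y ∈ nbr G x ↔ G.Adj x y := by simp [nbr]

lemma mem_cov {n : ℕ} {G : SimpleGraph (Fin n)} {S : Finset (Fin n)} {y : Fin n} :
    y ∈ S ∪ nbrS G S ↔ ∃ z ∈ insert y (nbr G y), z ∈ S := by
  simp only [Finset.mem_union, nbrS, Finset.mem_biUnion, mem_nbr, Finset.mem_insert]
  constructor
  · rintro (h | ⟨s, hs, hadj⟩)
    · exact ⟨y, Or.inl rfl, h⟩
    · exact ⟨s, Or.inr hadj.symm, hs⟩
  · rintro ⟨z, hz | hz, hzS⟩
    · exact Or.inl (hz ▸ hzS)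
    · exact Or.inr ⟨z, hzS, hz.symm⟩

/-- Marginal contribution of `x`. -/
lemma marg {n : ℕ} (G : SimpleGraph (Fin n)) {S : Finset (Fin n)} {x : Fin n} (hx : x ∉ S) :
    (((insert x S ∪ nbrS G (insert x S)).card : ℝ)) - ((S ∪ nbrS G S).card : ℝ)
      = ∑ y ∈ insert x (nbr G x),
          (if (insert y (nbr G y)) ∩ S = ∅ then (1 : ℝ) else 0) := by
  have hcov : insert x S ∪ nbrS G (insert x S) = (S ∪ nbrS G S) ∪ insert x (nbr G x) := by
    rw [nbrS, Finset.biUnion_insert]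
    ext z
    simp only [Finset.mem_union, Finset.mem_insert, Finset.mem_biUnion, nbrS]
    constructor
    · rintro ((rfl | h) | (h | ⟨a, ha, hz⟩))
      · exact Or.inr (Or.inl rfl)
      · exact Or.inl (Or.inl h)
      · exact Or.inr (Or.inr h)
      · exact Or.inl (Or.inr ⟨a, ha, hz⟩)
    · rintro ((h | ⟨a, ha, hz⟩) | (rfl | h))
      · exact Or.inl (Or.inr h)
      · exact Or.inr (Or.inr ⟨a, ha, hz⟩)
      · exact Or.inl (Or.inl rfl)
      · exact Or.inr (Or.inl h)
  have hcard : ((insert x (nbr G x)) \ (S ∪ nbrS G S)).card + (S ∪ nbrS G S).card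
      = (insert x S ∪ nbrS G (insert x S)).card := by
    rw [hcov, Finset.union_comm (S ∪ nbrS G S)]
    exact Finset.card_sdiff_add_card _ _
  have h1 : (((insert x S ∪ nbrS G (insert x S)).card : ℝ)) - ((S ∪ nbrS G S).card : ℝ)
      = (((insert x (nbr G x)) \ (S ∪ nbrS G S)).card : ℝ) := by
    rw [← hcard]; push_cast; ring
  rw [h1]
  rw [Finset.sdiff_eq_filter, Finset.card_filter]
  push_cast
  refine Finset.sum_congr rfl fun y hy => ?_
  have : y ∉ S ∪ nbrS G S ↔ (insert y (nbr G y)) ∩ S = ∅ := by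
    rw [mem_cov, Finset.eq_empty_iff_forall_notMem]
    simp only [Finset.mem_inter]
    push_neg
    tauto
  split_ifs with h1 h2 h2 <;> simp_all

/-- Counting permutations where `x` is first among `A`. -/
lemma count_min {n : ℕ} (A : Finset (Fin n)) {x : Fin n} (hx : x ∈ A) :
    (Finset.univ.filter fun π : Equiv.Perm (Fin n) =>
        ∀ z ∈ A, π.symm x ≤ π.symm z).card * A.card = n.factorial := by
  set f : Fin n → ℕ := fun a =>
    (Finset.univ.filter fun π : Equiv.Perm (Fin n) => ∀ z ∈ A, π.symm a ≤ π.symm z).card with hf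
  have hswapA : ∀ a ∈ A, ∀ z ∈ A, Equiv.swap a x z ∈ A := by
    intro a ha z hz
    rcases eq_or_ne z a with rfl | h1
    · rw [Equiv.swap_apply_left]; exact hx
    rcases eq_or_ne z x with rfl | h2
    · rw [Equiv.swap_apply_right]; exact ha
    · rw [Equiv.swap_apply_of_ne_of_ne h1 h2]; exact hz
  have hkey : ∀ a ∈ A, f a = f x := by
    intro a ha
    refine Finset.card_bij' (fun π _ => π.trans (Equiv.swap a x))
      (fun π _ => π.trans (Equiv.swap a x)) ?_ ?_ ?_ ?_
    · intro π hπ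
      simp only [Finset.mem_filter, Finset.mem_univ, true_and] at hπ ⊢
      intro z hz
      have := hπ (Equiv.swap a x z) (hswapA a ha z hz)
      simpa [Equiv.symm_trans_apply] using this
    · intro π hπ
      simp only [Finset.mem_filter, Finset.mem_univ, true_and] at hπ ⊢
      intro z hz
      have := hπ (Equiv.swap a x z) (hswapA a ha z hz)
      simpa [Equiv.symm_trans_apply] using this
    · intro π _; ext i; simp
    · intro π _; ext i; simp
  have hfeq : ∀ a : Fin n, f a
      = ∑ π : Equiv.Perm (Fin n), (if ∀ z ∈ A, π.symm a ≤ π.symm z then 1 else 0) :=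
    fun a => Finset.card_filter _ _
  have hsum : ∑ a ∈ A, f a = n.factorial := by
    have h1 : ∑ a ∈ A, f a
        = ∑ π : Equiv.Perm (Fin n), ∑ a ∈ A, (if ∀ z ∈ A, π.symm a ≤ π.symm z then 1 else 0) := by
      rw [Finset.sum_congr rfl fun a _ => hfeq a, Finset.sum_comm]
    rw [h1]
    have h2 : ∀ π : Equiv.Perm (Fin n),
        ∑ a ∈ A, (if ∀ z ∈ A, π.symm a ≤ π.symm z then 1 else 0) = 1 := by
      intro π
      obtain ⟨a₀, ha₀, hmin⟩ := A.exists_min_image (fun z => π.symm z) ⟨x, hx⟩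
      rw [← Finset.card_filter]
      rw [Finset.card_eq_one]
      refine ⟨a₀, ?_⟩
      ext b
      simp only [Finset.mem_filter, Finset.mem_singleton]
      constructor
      · rintro ⟨hb, hball⟩
        have h3 := hball a₀ ha₀
        have h4 := hmin b hb
        exact π.symm.injective (le_antisymm h3 h4)
      · rintro rfl; exact ⟨ha₀, hmin⟩
    rw [Finset.sum_congr rfl fun π _ => h2 π]
    simp [Finset.card_univ, Fintype.card_perm]
  calc (Finset.univ.filter fun π : Equiv.Perm (Fin n) =>
        ∀ z ∈ A, π.symm x ≤ π.symm z).card * A.card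
      = ∑ a ∈ A, f x := by rw [Finset.sum_const, smul_eq_mul, mul_comm]
    _ = ∑ a ∈ A, f a := Finset.sum_congr rfl fun a ha => (hkey a ha).symm
    _ = n.factorial := hsum

theorem shapley_game_theoretic_centrality (n : ℕ) (G : SimpleGraph (Fin n)) (x : Fin n) :
    Sh (fun S : Finset (Fin n) => ((S ∪ nbrS G S).card : ℝ)) x =
      ∑ y ∈ insert x (nbr G x), 1 / (((nbr G y).card : ℝ) + 1) := by
  have hxp : ∀ π : Equiv.Perm (Fin n), x ∉ preds π x := by
    intro π
    simp [preds]
  have hcount : ∀ y ∈ insert x (nbr G x),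
      (Finset.univ.filter fun π : Equiv.Perm (Fin n) =>
        ∀ z ∈ insert y (nbr G y), π.symm x ≤ π.symm z).card * (insert y (nbr G y)).card
        = n.factorial := by
    intro y hy
    apply count_min
    rcases Finset.mem_insert.mp hy with rfl | h
    · exact Finset.mem_insert_self _ _
    · exact Finset.mem_insert_of_mem (mem_nbr.mpr (mem_nbr.mp h).symm)
  rw [Sh]
  have hnum : (∑ π : Equiv.Perm (Fin n),
      (((insert x (preds π x) ∪ nbrS G (insert x (preds π x))).card : ℝ)
        - ((preds π x ∪ nbrS G (preds π x)).card : ℝ)))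
      = ∑ y ∈ insert x (nbr G x),
          ((Finset.univ.filter fun π : Equiv.Perm (Fin n) =>
            ∀ z ∈ insert y (nbr G y), π.symm x ≤ π.symm z).card : ℝ) := by
    have h1 : ∀ π : Equiv.Perm (Fin n),
        (((insert x (preds π x) ∪ nbrS G (insert x (preds π x))).card : ℝ)
          - ((preds π x ∪ nbrS G (preds π x)).card : ℝ))
        = ∑ y ∈ insert x (nbr G x),
            (if (insert y (nbr G y)) ∩ preds π x = ∅ then (1 : ℝ) else 0) :=
      fun π => marg G (hxp π)
    rw [Finset.sum_congr rfl fun π _ => h1 π, Finset.sum_comm]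
    refine Finset.sum_congr rfl fun y _ => ?_
    have hiff : ∀ π : Equiv.Perm (Fin n),
        ((insert y (nbr G y)) ∩ preds π x = ∅)
          ↔ (∀ z ∈ insert y (nbr G y), π.symm x ≤ π.symm z) := by
      intro π
      constructor
      · intro h z hz
        by_contra hlt
        have hmem : z ∈ insert y (nbr G y) ∩ preds π x :=
          Finset.mem_inter.mpr ⟨hz, by simp [preds, lt_of_not_ge hlt]⟩
        simp [h] at hmem
      · intro h
        rw [Finset.eq_empty_iff_forall_notMem]
        intro z hz
        rw [Finset.mem_inter] at hz
        have h2 := h z hz.1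
        have h3 := hz.2
        simp only [preds, Finset.mem_filter, Finset.mem_univ, true_and] at h3
        exact absurd h3 (not_lt.mpr h2)
    calc ∑ π : Equiv.Perm (Fin n),
          (if (insert y (nbr G y)) ∩ preds π x = ∅ then (1 : ℝ) else 0)
        = ∑ π : Equiv.Perm (Fin n),
            (if ∀ z ∈ insert y (nbr G y), π.symm x ≤ π.symm z then (1 : ℝ) else 0) :=
          Finset.sum_congr rfl fun π _ => if_congr (hiff π) rfl rfl
      _ = _ := by rw [Finset.sum_boole]
  rw [hnum, Finset.sum_div]
  refine Finset.sum_congr rfl fun y hy => ?_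
  have hc := hcount y hy
  have hyn : y ∉ nbr G y := by simp [mem_nbr]
  have hcard : (insert y (nbr G y)).card = (nbr G y).card + 1 :=
    Finset.card_insert_of_notMem hyn
  rw [hcard] at hc
  have hfac : (0 : ℝ) < (n.factorial : ℝ) := by positivity
  rw [div_eq_div_iff hfac.ne' (by positivity)]
  have := congrArg (fun m : ℕ => (m : ℝ)) hc
  push_cast at this
  linarith [this]

end
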